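/- arXiv:1006.2603 — 9 statements merged into one kernel-verified Lean document; each statement's English description precedes it below -/
import Mathlib

section
/- If the diagonal entries D_1, …, D_n are pairwise distinct, then for every eigenvalue λ of A = D + J the associated eigenspace {W ∈ ℂⁿ : A W = λ W} has dimension exactly 1; in fact it is spanned by the vector W with components W_j = 1/(λ − D_j). -/
/-- If the diagonal entries are pairwise distinct, the eigenspace of `A = D + J` associated
with any eigenvalue `λ` is one-dimensional, spanned by the vector `W_j = 1/(λ − D_j)`. -/
theorem stmt2 (p : ℕ) (hp : 1 ≤ p) (D : Fin (2*p) → ℂ)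
    (hD : Function.Injective D) (lam : ℂ)
    (hlam : ∃ W : Fin (2*p) → ℂ, W ≠ 0 ∧
      (Matrix.diagonal D + Matrix.of fun _ _ => (1 : ℂ)).mulVec W = lam • W) :
    Module.End.eigenspace
        (Matrix.toLin' (Matrix.diagonal D + Matrix.of fun _ _ => (1 : ℂ))) lam
      = Submodule.span ℂ {fun j => (lam - D j)⁻¹} ∧
    Module.finrank ℂ
      (Module.End.eigenspace
        (Matrix.toLin' (Matrix.diagonal D + Matrix.of fun _ _ => (1 : ℂ))) lam) = 1 := by
  classical
  set A : Matrix (Fin (2*p)) (Fin (2*p)) ℂ :=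
    Matrix.diagonal D + Matrix.of fun _ _ => (1 : ℂ) with hA
  obtain ⟨W₀, hW₀, hEig⟩ := hlam
  have hentry : ∀ (W : Fin (2*p) → ℂ) i, A.mulVec W i = D i * W i + ∑ j, W j := by
    intro W i
    simp [A, Matrix.mulVec, dotProduct, Matrix.add_apply, Matrix.diagonal_apply,
      add_mul, Finset.sum_add_distrib, ite_mul, Finset.sum_ite_eq]
  have key : ∀ W : Fin (2*p) → ℂ, A.mulVec W = lam • W ↔
      ∀ i, (lam - D i) * W i = ∑ j, W j := by
    intro W
    constructor
    · intro h i
      have h1 := congrFun h i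
      rw [hentry] at h1
      simp only [Pi.smul_apply, smul_eq_mul] at h1
      linear_combination -h1
    · intro h
      funext i
      rw [hentry]
      simp only [Pi.smul_apply, smul_eq_mul]
      linear_combination -(h i)
  have hkey0 := (key W₀).mp hEig
  have hne : ∀ j, lam - D j ≠ 0 := by
    intro j hj
    have hS0 : ∑ k, W₀ k = 0 := by
      have := hkey0 j
      rw [hj, zero_mul] at this
      exact this.symm
    have hzero : ∀ i, i ≠ j → W₀ i = 0 := by
      intro i hi
      have h1 : (lam - D i) * W₀ i = 0 := by rw [hkey0 i, hS0]
      have h2 : lam - D i ≠ 0 := by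
        intro h
        exact hi (hD (by rw [← sub_eq_zero.mp h, ← sub_eq_zero.mp hj]))
      exact (mul_eq_zero.mp h1).resolve_left h2
    have hWj : W₀ j = 0 := by
      have : ∑ k, W₀ k = W₀ j := Finset.sum_eq_single j
        (fun k _ hk => hzero k hk) (fun h => absurd (Finset.mem_univ j) h)
      rw [hS0] at this
      exact this.symm
    apply hW₀
    funext i
    by_cases hi : i = j
    · rw [hi]; exact hWj
    · exact hzero i hi
  set v : Fin (2*p) → ℂ := fun j => (lam - D j)⁻¹ with hv
  set S₀ : ℂ := ∑ k, W₀ k with hS₀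
  have hS₀ne : S₀ ≠ 0 := by
    intro h
    apply hW₀
    funext i
    have h1 := hkey0 i
    rw [h] at h1
    exact (mul_eq_zero.mp h1).resolve_left (hne i)
  have hvW₀ : v = S₀⁻¹ • W₀ := by
    funext i
    simp only [hv, Pi.smul_apply, smul_eq_mul]
    field_simp [hne i]
    linear_combination -(hkey0 i)
  have hvne : v ≠ 0 := by
    intro h
    have i0 : Fin (2*p) := ⟨0, by omega⟩
    have := congrFun h i0
    simp only [hv, Pi.zero_apply] at this
    exact hne i0 (by simpa using inv_eq_zero.mp this)
  have hmem : ∀ W : Fin (2*p) → ℂ,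
      W ∈ Module.End.eigenspace (Matrix.toLin' A) lam ↔ A.mulVec W = lam • W := by
    intro W
    rw [Module.End.mem_eigenspace_iff, Matrix.toLin'_apply]
  have heq : Module.End.eigenspace (Matrix.toLin' A) lam = Submodule.span ℂ {v} := by
    apply le_antisymm
    · intro W hW
      have hk := (key W).mp ((hmem W).mp hW)
      have : W = (∑ k, W k) • v := by
        funext i
        simp only [hv, Pi.smul_apply, smul_eq_mul]
        field_simp [hne i]
        linear_combination hk i
      rw [this]
      exact Submodule.smul_mem _ _ (Submodule.mem_span_singleton_self v)
    · rw [Submodule.span_le, Set.singleton_subset_iff]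
      rw [SetLike.mem_coe, hvW₀]
      exact Submodule.smul_mem _ _ ((hmem W₀).mpr hEig)
  refine ⟨heq, ?_⟩
  rw [heq]
  exact finrank_span_singleton hvne
end

section
/- Assume the diagonal entries D_1, …, D_n are pairwise distinct and satisfy conj(D_j) = D_{n+1−j} for all j = 1, …, p. Then every eigenvalue of A = D + J is either real, or lies in the union over j = 1, …, p of the closed disks in ℂ with center Re(D_j) and radius |Im(D_j)| (the disks having the segments [D_j, conj(D_j)] as diameters). -/
private lemma key_pair (x y a b N1 N2 : ℝ) (hy : y ≠ 0)
    (hgt : b^2 < (x-a)^2 + y^2)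
    (hN1 : N1 = (x-a)^2 + (y-b)^2) (hN2 : N2 = (x-a)^2 + (y+b)^2)
    (h1 : 0 < N1) (h2 : 0 < N2) :
    y * (-(y - b) / N1 + -(y + b) / N2) < 0 := by
  have heq : y * (-(y - b) / N1 + -(y + b) / N2)
      = (y * (-(y - b) * N2 - (y + b) * N1)) / (N1 * N2) := by
    rw [div_add_div _ _ (ne_of_gt h1) (ne_of_gt h2), mul_div_assoc]
    ring_nf
  rw [heq]
  apply div_neg_of_neg_of_pos _ (mul_pos h1 h2)
  have : y * (-(y - b) * N2 - (y + b) * N1) = -2 * y^2 * ((x-a)^2 + y^2 - b^2) := by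
    rw [hN1, hN2]; ring
  rw [this]
  have hy2 : 0 < y^2 := by positivity
  nlinarith

/-- If the diagonal entries are pairwise distinct and satisfy `conj(D_j) = D_{n+1−j}` for
`j = 1, …, p` (here `n = 2p` and, in `Fin (2*p)` indexing, `D (j.rev) = conj (D j)` for
`j < p`), then every eigenvalue of `A = D + J` is either real or lies in one of the closed
disks with center `Re(D_j)` and radius `|Im(D_j)|`, `j = 1, …, p`. -/
theorem stmt5 (p : ℕ) (hp : 1 ≤ p) (D : Fin (2*p) → ℂ)
    (hD : Function.Injective D)
    (hsym : ∀ j : Fin (2*p), (j : ℕ) < p → (starRingEnd ℂ) (D j) = D j.rev)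
    (lam : ℂ)
    (hlam : ∃ W : Fin (2*p) → ℂ, W ≠ 0 ∧
      (Matrix.diagonal D + Matrix.of fun _ _ => (1 : ℂ)).mulVec W = lam • W) :
    lam.im = 0 ∨ ∃ j : Fin (2*p), (j : ℕ) < p ∧
      ‖lam - ((D j).re : ℂ)‖ ≤ |(D j).im| := by
  obtain ⟨W, hW0, heq⟩ := hlam
  set s : ℂ := ∑ k, W k with hs
  have hrow : ∀ i, D i * W i + s = lam * W i := by
    intro i
    have h := congrFun heq i
    have h2 : (Matrix.diagonal D).mulVec W i + (Matrix.of fun _ _ => (1:ℂ)).mulVec W i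
        = lam * W i := by simpa [Matrix.add_mulVec] using h
    rw [Matrix.mulVec_diagonal] at h2
    simpa [Matrix.mulVec, dotProduct, hs] using h2
  -- helper facts about disk membership from eigenvalue = D i or conj (D i)
  have hdisk : ∀ z : ℂ, ‖z - (z.re : ℂ)‖ = |z.im| := by
    intro z
    have : z - (z.re : ℂ) = (z.im : ℂ) * Complex.I := by
      simp [Complex.ext_iff]
    rw [this, norm_mul, Complex.norm_I, Complex.norm_real, Real.norm_eq_abs, mul_one]
  by_cases hs0 : s = 0
  · -- lam = D i for some i
    right
    have : ∃ i, W i ≠ 0 := by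
      by_contra h
      push_neg at h
      exact hW0 (funext fun i => h i)
    obtain ⟨i, hWi⟩ := this
    have hlamD : lam = D i := by
      have h := hrow i
      rw [hs0, add_zero] at h
      exact (mul_right_cancel₀ hWi h).symm
    rcases lt_or_ge (i : ℕ) p with hi | hi
    · exact ⟨i, hi, by rw [hlamD, hdisk]⟩
    · have hi2 := i.isLt
      refine ⟨i.rev, by rw [Fin.val_rev]; omega, ?_⟩
      have hconj : (starRingEnd ℂ) (D i.rev) = D i := by
        rw [hsym i.rev (by rw [Fin.val_rev]; omega), Fin.rev_rev]
      rw [hlamD, ← hconj]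
      set z := D i.rev
      have hre : ((starRingEnd ℂ) z).re = z.re := by simp
      have : (starRingEnd ℂ) z - ((z.re : ℝ) : ℂ) = (starRingEnd ℂ) (z - (z.re : ℂ)) := by
        simp [map_sub]
      rw [this, Complex.norm_conj, hdisk]
  · -- s ≠ 0; secular equation
    by_contra hcon
    push_neg at hcon
    obtain ⟨hy, hout⟩ := hcon
    have hne : ∀ i, lam ≠ D i := by
      intro i h
      have hr := hrow i
      rw [← h] at hr
      have : s = 0 := by linear_combination hr
      exact hs0 this
    have hWf : ∀ i, W i = s * (lam - D i)⁻¹ := by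
      intro i
      have hr := hrow i
      have hd : lam - D i ≠ 0 := sub_ne_zero.mpr (hne i)
      field_simp
      linear_combination -hr
    have hsec : ∑ i, (lam - D i)⁻¹ = 1 := by
      have h1 : s = s * ∑ i, (lam - D i)⁻¹ := by
        rw [Finset.mul_sum]
        calc s = ∑ k, W k := hs
        _ = ∑ k, s * (lam - D k)⁻¹ := by exact Finset.sum_congr rfl fun k _ => hWf k
      have h2 : s * (∑ i, (lam - D i)⁻¹) = s * 1 := by rw [mul_one, ← h1]
      exact mul_left_cancel₀ hs0 h2
    have him : ∑ i, ((lam - D i)⁻¹).im = 0 := by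
      rw [← Complex.im_sum, hsec]; rfl
    -- split the sum into pairs
    set g : Fin (2*p) → ℝ := fun i => ((lam - D i)⁻¹).im with hg
    set S : Finset (Fin (2*p)) := Finset.univ.filter (fun i => (i : ℕ) < p) with hS
    have hsplit : ∑ i, g i = ∑ i ∈ S, (g i + g i.rev) := by
      rw [Finset.sum_add_distrib]
      rw [← Finset.sum_filter_add_sum_filter_not (Finset.univ : Finset (Fin (2*p))) (fun i => (i : ℕ) < p) g]
      congr 1
      apply Finset.sum_nbij' (fun i => Fin.rev i) (fun i => Fin.rev i)
      · intro a ha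
        simp only [hS, Finset.mem_filter, Finset.mem_univ, true_and, not_lt] at ha ⊢
        have := a.isLt
        rw [Fin.val_rev]; omega
      · intro a ha
        simp only [hS, Finset.mem_filter, Finset.mem_univ, true_and, not_lt] at ha ⊢
        have := a.isLt
        rw [Fin.val_rev]; omega
      · intro a _; exact Fin.rev_rev a
      · intro a _; exact Fin.rev_rev a
      · intro a _; rw [Fin.rev_rev]
    -- each pair term multiplied by lam.im is negative
    have hterm : ∀ i ∈ S, lam.im * (g i + g i.rev) < 0 := by
      intro i hi
      simp only [hS, Finset.mem_filter, Finset.mem_univ, true_and] at hi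
      have hconj : D i.rev = (starRingEnd ℂ) (D i) := (hsym i hi).symm
      set a := (D i).re
      set b := (D i).im
      set x := lam.re
      set y := lam.im
      have hd1 : lam - D i ≠ 0 := sub_ne_zero.mpr (hne i)
      have hd2 : lam - D i.rev ≠ 0 := sub_ne_zero.mpr (hne i.rev)
      have hN1 : Complex.normSq (lam - D i) = (x - a)^2 + (y - b)^2 := by
        simp [Complex.normSq_apply, Complex.sub_re, Complex.sub_im]; ring
      have hN2 : Complex.normSq (lam - D i.rev) = (x - a)^2 + (y + b)^2 := by
        rw [hconj]
        simp [Complex.normSq_apply, Complex.sub_re, Complex.sub_im]; ring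
      have him1 : (lam - D i).im = y - b := by simp [Complex.sub_im]; rfl
      have him2 : (lam - D i.rev).im = y + b := by
        rw [hconj]; simp [Complex.sub_im]; rfl
      have hg1 : g i = -(y - b) / ((x - a)^2 + (y - b)^2) := by
        show ((lam - D i)⁻¹).im = _
        rw [Complex.inv_im, hN1, him1]
      have hg2 : g i.rev = -(y + b) / ((x - a)^2 + (y + b)^2) := by
        show ((lam - D i.rev)⁻¹).im = _
        rw [Complex.inv_im, hN2, him2]
      have hgt : b^2 < (x - a)^2 + y^2 := by
        have h := hout i hi
        have habs : |b| < ‖lam - (a : ℂ)‖ := h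
        have hsq : |b|^2 < ‖lam - (a : ℂ)‖^2 := by
          apply pow_lt_pow_left₀ habs (abs_nonneg _) (by norm_num)
        rw [sq_abs, Complex.sq_norm, Complex.normSq_apply, Complex.sub_re, Complex.sub_im,
          Complex.ofReal_re, Complex.ofReal_im] at hsq
        nlinarith [hsq]
      rw [hg1, hg2]
      have h1 : (0:ℝ) < (x - a)^2 + (y - b)^2 := by
        have := Complex.normSq_pos.mpr hd1
        rw [hN1] at this; exact this
      have h2 : (0:ℝ) < (x - a)^2 + (y + b)^2 := by
        have := Complex.normSq_pos.mpr hd2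
        rw [hN2] at this; exact this
      exact key_pair x y a b _ _ hy hgt rfl rfl h1 h2
    have hSne : S.Nonempty := ⟨⟨0, by omega⟩, by simp only [hS, Finset.mem_filter, Finset.mem_univ, true_and]; omega⟩
    have hneg : ∑ i ∈ S, lam.im * (g i + g i.rev) < 0 :=
      Finset.sum_neg hterm hSne
    rw [← Finset.mul_sum, ← hsplit, him, mul_zero] at hneg
    exact lt_irrefl 0 hneg
end

section
/- Let ε > 0. If λ ∈ ℝ is a real eigenvalue of A_ε = εD + J, then λ > ε·min_{1≤j≤p} α_j. -/
/-- The diagonal vector `(α_p − iβ_p, …, α_1 − iβ_1, α_1 + iβ_1, …, α_p + iβ_p)`, indexed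
by `Fin p ⊕ Fin p` (the order of the diagonal entries is immaterial for spectral purposes). -/
noncomputable def stmt7Dvec {p : ℕ} (α β : Fin p → ℝ) : Fin p ⊕ Fin p → ℂ :=
  Sum.elim (fun j => (α j : ℂ) - Complex.I * (β j : ℂ))
    (fun j => (α j : ℂ) + Complex.I * (β j : ℂ))

/-- If `λ ∈ ℝ` is a real eigenvalue of `A_ε = εD + J` (with `ε > 0` and pairwise distinct
diagonal entries), then `λ > ε · min_j α_j`. -/
theorem stmt7 (p : ℕ) (hp : 1 ≤ p) (α β : Fin p → ℝ)
    (hD : Function.Injective (stmt7Dvec α β)) (ε : ℝ) (hε : 0 < ε) (lam : ℝ)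
    (hlam : ∃ W : Fin p ⊕ Fin p → ℂ, W ≠ 0 ∧
      ((ε : ℂ) • Matrix.diagonal (stmt7Dvec α β)
        + Matrix.of fun _ _ => (1 : ℂ)).mulVec W = (lam : ℂ) • W) :
    lam > ε * Finset.univ.inf'
      (Finset.univ_nonempty_iff.mpr (Fin.pos_iff_nonempty.mp hp)) α := by
  obtain ⟨W, hW0, hW⟩ := hlam
  set d := stmt7Dvec α β with hd
  set S : ℂ := ∑ k, W k with hS
  set m := Finset.univ.inf'
      (Finset.univ_nonempty_iff.mpr (Fin.pos_iff_nonempty.mp hp)) α with hm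
  have hcomp : ∀ k, (ε : ℂ) * d k * W k + S = (lam : ℂ) * W k := by
    intro k
    have := congrFun hW k
    simp [Matrix.mulVec, dotProduct, Matrix.add_apply, Matrix.smul_apply,
      Matrix.diagonal_apply, add_mul, Finset.sum_add_distrib, Finset.sum_ite_eq,
      hS, mul_assoc] at this ⊢
    exact this
  by_cases hSz : S = 0
  · -- then eigenvector is concentrated on one index, so S ≠ 0: contradiction
    exfalso
    obtain ⟨k0, hk0⟩ := Function.ne_iff.mp hW0
    have hk0' : W k0 ≠ 0 := hk0
    have heig : (lam : ℂ) = (ε : ℂ) * d k0 := by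
      have := hcomp k0
      rw [hSz, add_zero] at this
      exact (mul_right_cancel₀ hk0' this.symm)
    have hzero : ∀ k, k ≠ k0 → W k = 0 := by
      intro k hk
      by_contra hWk
      have := hcomp k
      rw [hSz, add_zero] at this
      have h2 : (ε : ℂ) * d k = (lam : ℂ) := mul_right_cancel₀ hWk this
      have : d k = d k0 := by
        have hεc : (ε : ℂ) ≠ 0 := Complex.ofReal_ne_zero.mpr hε.ne'
        rw [heig] at h2
        exact mul_left_cancel₀ hεc h2
      exact hk (hD this)
    have : S = W k0 := by
      rw [hS]
      exact Finset.sum_eq_single k0 (fun k _ hk => hzero k hk) (by simp)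
    exact hk0' (this ▸ hSz)
  · -- main case
    have hne : ∀ k, (lam : ℂ) - (ε : ℂ) * d k ≠ 0 := by
      intro k hk0
      have h1 : (lam : ℂ) = (ε : ℂ) * d k := by linear_combination hk0
      have := hcomp k
      rw [← h1] at this
      exact hSz (by linear_combination this)
    have hWk : ∀ k, W k = S * ((lam : ℂ) - (ε : ℂ) * d k)⁻¹ := by
      intro k
      have h := hcomp k
      field_simp [hne k]
      linear_combination -h
    have hsum1 : (∑ k, ((lam : ℂ) - (ε : ℂ) * d k)⁻¹) = 1 := by
      have : S = S * ∑ k, ((lam : ℂ) - (ε : ℂ) * d k)⁻¹ := by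
        rw [Finset.mul_sum, hS]
        exact Finset.sum_congr rfl fun k _ => hWk k
      exact (mul_left_cancel₀ hSz (by rw [mul_one]; exact this)).symm
    by_contra hcon
    push_neg at hcon
    have hre : ∀ k, (((lam : ℂ) - (ε : ℂ) * d k)⁻¹).re ≤ 0 := by
      intro k
      rw [Complex.inv_re]
      apply div_nonpos_of_nonpos_of_nonneg _ (Complex.normSq_nonneg _)
      have hdre : (d k).re ≥ m := by
        rcases k with j | j
        · have : (d (Sum.inl j)).re = α j := by
            simp [hd, stmt7Dvec]
          rw [this]
          exact Finset.inf'_le _ (Finset.mem_univ j)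
        · have : (d (Sum.inr j)).re = α j := by
            simp [hd, stmt7Dvec]
          rw [this]
          exact Finset.inf'_le _ (Finset.mem_univ j)
      have : ((lam : ℂ) - (ε : ℂ) * d k).re = lam - ε * (d k).re := by
        simp [Complex.sub_re, Complex.mul_re]
      rw [this]
      nlinarith [mul_le_mul_of_nonneg_left hdre hε.le]
    have : ((∑ k, ((lam : ℂ) - (ε : ℂ) * d k)⁻¹)).re ≤ 0 := by
      rw [Complex.re_sum]
      exact Finset.sum_nonpos fun k _ => hre k
    rw [hsum1] at this
    norm_num at this
end

section
/- Let ε > 0 and define h(ε, y) = 2·∑_{j=1}^{p} (y − εα_j) / ((y − εα_j)² + ε²β_j²) for y ∈ ℝ. Then the function y ↦ h(ε, y) is strictly decreasing on the interval (ε·max_{1≤j≤p}(α_j + |β_j|), ∞). -/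
/-- For fixed `ε > 0`, the function
`y ↦ h(ε,y) = 2 ∑_{j=1}^p (y − εα_j)/((y − εα_j)² + ε²β_j²)` is strictly decreasing on the
interval `(ε · max_j (α_j + |β_j|), ∞)`. -/
theorem stmt8 (p : ℕ) (hp : 1 ≤ p) (α β : Fin p → ℝ) (ε : ℝ) (hε : 0 < ε) :
    StrictAntiOn
      (fun y : ℝ => 2 * ∑ j, (y - ε * α j) / ((y - ε * α j) ^ 2 + ε ^ 2 * (β j) ^ 2))
      (Set.Ioi (ε * Finset.univ.sup'
        (Finset.univ_nonempty_iff.mpr (Fin.pos_iff_nonempty.mp hp))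
        (fun j => α j + |β j|))) := by
  intro x hx y hy hxy
  simp only [Set.mem_Ioi] at hx hy
  have hne : (Finset.univ : Finset (Fin p)).Nonempty :=
    Finset.univ_nonempty_iff.mpr (Fin.pos_iff_nonempty.mp hp)
  have key : ∀ z : ℝ, ε * Finset.univ.sup' hne (fun j => α j + |β j|) < z →
      ∀ j : Fin p, |ε * β j| < z - ε * α j := by
    intro z hz j
    have h1 : α j + |β j| ≤ Finset.univ.sup' hne (fun j => α j + |β j|) :=
      Finset.le_sup' (fun j => α j + |β j|) (Finset.mem_univ j)
    have h2 : ε * (α j + |β j|) < z := lt_of_le_of_lt (by nlinarith) hz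
    rw [abs_mul, abs_of_pos hε]
    nlinarith
  have hterm : ∀ j : Fin p,
      (y - ε * α j) / ((y - ε * α j) ^ 2 + ε ^ 2 * (β j) ^ 2) <
      (x - ε * α j) / ((x - ε * α j) ^ 2 + ε ^ 2 * (β j) ^ 2) := by
    intro j
    have hxj := key x hx j
    have hyj := key y hy j
    have habs : (0:ℝ) ≤ |ε * β j| := abs_nonneg _
    have hsq : |ε * β j| ^ 2 = ε ^ 2 * (β j) ^ 2 := by
      rw [abs_mul, mul_pow, sq_abs, sq_abs]
    have hxp : 0 < x - ε * α j := lt_of_le_of_lt habs hxj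
    have hyp : 0 < y - ε * α j := lt_of_le_of_lt habs hyj
    have hdx : 0 < (x - ε * α j) ^ 2 + ε ^ 2 * (β j) ^ 2 := by positivity
    have hdy : 0 < (y - ε * α j) ^ 2 + ε ^ 2 * (β j) ^ 2 := by positivity
    rw [div_lt_div_iff₀ hdy hdx]
    nlinarith [mul_lt_mul'' hxj hyj habs habs]
  have hsum : ∑ j, (y - ε * α j) / ((y - ε * α j) ^ 2 + ε ^ 2 * (β j) ^ 2) <
      ∑ j, (x - ε * α j) / ((x - ε * α j) ^ 2 + ε ^ 2 * (β j) ^ 2) :=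
    Finset.sum_lt_sum_of_nonempty hne (fun j _ => hterm j)
  simpa using by linarith
end

section
/- Let ε > 0. Then the matrix A_ε = εD + J has at most one real eigenvalue in the open interval (ε·max_{1≤j≤p}(α_j + |β_j|), ∞). -/
open Complex Matrix Finset

private lemma stmt10secular {n : Type*} [Fintype n] [DecidableEq n] (d : n → ℂ) (ε : ℝ) (lam : ℝ)
    (hne : ∀ k, (lam : ℂ) - ε * d k ≠ 0)
    (he : ∃ W : n → ℂ, W ≠ 0 ∧
      ((ε : ℂ) • Matrix.diagonal d + Matrix.of fun _ _ => (1 : ℂ)).mulVec W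
        = (lam : ℂ) • W) :
    ∑ k, ((lam : ℂ) - ε * d k)⁻¹ = 1 := by
  obtain ⟨W, hW0, hW⟩ := he
  set s : ℂ := ∑ j, W j with hs
  have key : ∀ k, ((lam : ℂ) - ε * d k) * W k = s := by
    intro k
    have h := congrFun hW k
    simp [Matrix.mulVec, dotProduct, Matrix.add_apply, Matrix.smul_apply,
      Matrix.diagonal_apply, Matrix.of_apply, add_mul, Finset.sum_add_distrib,
      ite_mul, smul_eq_mul, mul_ite, mul_zero, zero_mul, Finset.sum_ite_eq,
      Pi.smul_apply] at h
    linear_combination -h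
  have hs0 : s ≠ 0 := by
    intro h0
    apply hW0
    funext k
    have := key k
    rw [h0] at this
    exact (mul_eq_zero.mp this).resolve_left (hne k)
  have hmain : s = s * ∑ k, ((lam : ℂ) - ε * d k)⁻¹ := by
    calc s = ∑ k, W k := hs
    _ = ∑ k, s * ((lam : ℂ) - ε * d k)⁻¹ := by
        refine Finset.sum_congr rfl fun k _ => ?_
        rw [eq_mul_inv_iff_mul_eq₀ (hne k)]
        linear_combination key k
    _ = s * ∑ k, ((lam : ℂ) - ε * d k)⁻¹ := by rw [Finset.mul_sum]
  have h1 : s * ∑ k, ((lam : ℂ) - ε * d k)⁻¹ = s * 1 := by rw [mul_one]; exact hmain.symm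
  exact mul_left_cancel₀ hs0 h1



/-- The diagonal vector `(α_p − iβ_p, …, α_1 − iβ_1, α_1 + iβ_1, …, α_p + iβ_p)`, indexed
by `Fin p ⊕ Fin p` (the order of the diagonal entries is immaterial for spectral purposes). -/
noncomputable def stmt10Dvec {p : ℕ} (α β : Fin p → ℝ) : Fin p ⊕ Fin p → ℂ :=
  Sum.elim (fun j => (α j : ℂ) - Complex.I * (β j : ℂ))
    (fun j => (α j : ℂ) + Complex.I * (β j : ℂ))

/-- For `ε > 0`, the matrix `A_ε = εD + J` has at most one real eigenvalue in the open
interval `(ε · max_j (α_j + |β_j|), ∞)`. -/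
theorem stmt10 (p : ℕ) (hp : 1 ≤ p) (α β : Fin p → ℝ)
    (hD : Function.Injective (stmt10Dvec α β)) (ε : ℝ) (hε : 0 < ε)
    (lam₁ lam₂ : ℝ)
    (h₁ : lam₁ ∈ Set.Ioi (ε * Finset.univ.sup'
      (Finset.univ_nonempty_iff.mpr (Fin.pos_iff_nonempty.mp hp)) (fun j => α j + |β j|)))
    (h₂ : lam₂ ∈ Set.Ioi (ε * Finset.univ.sup'
      (Finset.univ_nonempty_iff.mpr (Fin.pos_iff_nonempty.mp hp)) (fun j => α j + |β j|)))
    (he₁ : ∃ W : Fin p ⊕ Fin p → ℂ, W ≠ 0 ∧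
      ((ε : ℂ) • Matrix.diagonal (stmt10Dvec α β)
        + Matrix.of fun _ _ => (1 : ℂ)).mulVec W = (lam₁ : ℂ) • W)
    (he₂ : ∃ W : Fin p ⊕ Fin p → ℂ, W ≠ 0 ∧
      ((ε : ℂ) • Matrix.diagonal (stmt10Dvec α β)
        + Matrix.of fun _ _ => (1 : ℂ)).mulVec W = (lam₂ : ℂ) • W) :
    lam₁ = lam₂ := by
  set d := stmt10Dvec α β with hd
  -- bound: for lam in the interval, lam - ε α j > ε |β j|
  have hb : ∀ lam : ℝ, lam ∈ Set.Ioi (ε * Finset.univ.sup'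
      (Finset.univ_nonempty_iff.mpr (Fin.pos_iff_nonempty.mp hp)) (fun j => α j + |β j|)) →
      ∀ j, ε * |β j| < lam - ε * α j := by
    intro lam hlam j
    have h1 : ε * (α j + |β j|) ≤ ε * Finset.univ.sup'
      (Finset.univ_nonempty_iff.mpr (Fin.pos_iff_nonempty.mp hp)) (fun j => α j + |β j|) :=
      mul_le_mul_of_nonneg_left (Finset.le_sup' (fun j => α j + |β j|) (Finset.mem_univ j)) hε.le
    have := lt_of_le_of_lt h1 hlam
    nlinarith
  have hb1 := hb lam₁ h₁
  have hb2 := hb lam₂ h₂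
  -- nonvanishing of lam - ε d k
  have hne : ∀ (lam : ℝ), (∀ j, ε * |β j| < lam - ε * α j) →
      ∀ k, (lam : ℂ) - ε * d k ≠ 0 := by
    intro lam hlam k
    have habs : ∀ j, 0 < lam - ε * α j := fun j =>
      lt_of_le_of_lt (mul_nonneg hε.le (abs_nonneg _)) (hlam j)
    cases k with
    | inl j =>
      intro h
      have := congrArg Complex.re h
      simp [hd, stmt10Dvec] at this
      exact absurd this (by nlinarith [habs j])
    | inr j =>
      intro h
      have := congrArg Complex.re h
      simp [hd, stmt10Dvec] at this
      exact absurd this (by nlinarith [habs j])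
  have S1 := stmt10secular d ε lam₁ (hne lam₁ hb1) he₁
  have S2 := stmt10secular d ε lam₂ (hne lam₂ hb2) he₂
  by_contra hne12
  have hd12 : (lam₂ : ℂ) - lam₁ ≠ 0 := by
    simp only [ne_eq, sub_eq_zero]
    exact fun h => hne12 (by exact_mod_cast h.symm)
  -- the sum of inverse products vanishes
  have hsum0 : ∑ k, (((lam₁:ℂ) - ε * d k) * ((lam₂:ℂ) - ε * d k))⁻¹ = 0 := by
    have h0 : ∑ k, (((lam₁:ℂ) - ε * d k)⁻¹ - ((lam₂:ℂ) - ε * d k)⁻¹) = 0 := by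
      rw [Finset.sum_sub_distrib, S1, S2, sub_self]
    have hterm : ∀ k, ((lam₁:ℂ) - ε * d k)⁻¹ - ((lam₂:ℂ) - ε * d k)⁻¹
        = ((lam₂:ℂ) - lam₁) * (((lam₁:ℂ) - ε * d k) * ((lam₂:ℂ) - ε * d k))⁻¹ := by
      intro k
      rw [mul_inv]
      field_simp [hne lam₁ hb1 k, hne lam₂ hb2 k]
      ring
    rw [Finset.sum_congr rfl (fun k _ => hterm k), ← Finset.mul_sum] at h0
    exact (mul_eq_zero.mp h0).resolve_left hd12
  -- conjugation pairing
  set f : Fin p ⊕ Fin p → ℂ :=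
    fun k => (((lam₁:ℂ) - ε * d k) * ((lam₂:ℂ) - ε * d k))⁻¹ with hf
  have hconj : ∀ j, f (Sum.inl j) = starRingEnd ℂ (f (Sum.inr j)) := by
    intro j
    have hc : ∀ lam : ℝ, (lam:ℂ) - ε * d (Sum.inl j)
        = starRingEnd ℂ ((lam:ℂ) - ε * d (Sum.inr j)) := by
      intro lam
      simp only [hd, stmt10Dvec, Sum.elim_inl, Sum.elim_inr, map_sub, _root_.map_mul,
        map_add, Complex.conj_ofReal, Complex.conj_I]
      ring
    simp only [hf]
    rw [hc lam₁, hc lam₂, ← _root_.map_mul, ← map_inv₀]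
  -- real part of each inr-term is positive
  have hpos : ∀ j, 0 < (f (Sum.inr j)).re := by
    intro j
    have hz : ((lam₁:ℂ) - ε * d (Sum.inr j)) * ((lam₂:ℂ) - ε * d (Sum.inr j))
        = (((lam₁ - ε * α j) * (lam₂ - ε * α j) - (ε * β j)^2 : ℝ) : ℂ)
          + Complex.I * ((-(ε * β j) * ((lam₁ - ε * α j) + (lam₂ - ε * α j)) : ℝ) : ℂ) := by
      simp only [hd, stmt10Dvec, Sum.elim_inr]
      push_cast
      linear_combination ((ε:ℂ)^2 * ((β j):ℂ)^2) * Complex.I_sq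
    have hzre : 0 < (((lam₁:ℂ) - ε * d (Sum.inr j)) * ((lam₂:ℂ) - ε * d (Sum.inr j))).re := by
      rw [hz]
      simp only [Complex.add_re, Complex.ofReal_re, Complex.mul_re, Complex.I_re,
        Complex.I_im, Complex.ofReal_im, zero_mul, one_mul, mul_zero, zero_sub, sub_zero]
      have t1 := hb1 j
      have t2 := hb2 j
      have ha : 0 ≤ ε * |β j| := mul_nonneg hε.le (abs_nonneg _)
      have hsq : (ε * β j)^2 = (ε * |β j|)^2 := by
        rw [mul_pow, mul_pow, _root_.sq_abs]
      nlinarith [mul_pos (lt_of_le_of_lt ha t1) (lt_of_le_of_lt ha t2)]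
    have hz0 : ((lam₁:ℂ) - ε * d (Sum.inr j)) * ((lam₂:ℂ) - ε * d (Sum.inr j)) ≠ 0 :=
      fun h => by rw [h] at hzre; simp at hzre
    rw [hf]
    simp only [Complex.inv_re]
    exact div_pos hzre (Complex.normSq_pos.mpr hz0)
  -- derive contradiction
  have hre0 : (∑ k, f k).re = 0 := by rw [hsum0]; simp
  rw [Complex.re_sum, Fintype.sum_sum_type] at hre0
  have : ∑ j, (f (Sum.inl j)).re + ∑ j, (f (Sum.inr j)).re
      = ∑ j, 2 * (f (Sum.inr j)).re := by
    rw [Finset.sum_congr rfl (fun j _ => by rw [hconj j, Complex.conj_re] : ∀ j ∈ Finset.univ, (f (Sum.inl j)).re = (f (Sum.inr j)).re)]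
    rw [← Finset.sum_add_distrib]
    exact Finset.sum_congr rfl fun j _ => by ring
  rw [this] at hre0
  have hposSum : 0 < ∑ j, 2 * (f (Sum.inr j)).re :=
    Finset.sum_pos (fun j _ => by linarith [hpos j])
      (Finset.univ_nonempty_iff.mpr (Fin.pos_iff_nonempty.mp hp))
  linarith
end

section
/- Let ε > 0, δt > 0, and consider the amplification matrix A_{δt} = (1 − δt/ε²)·I_{n} + (δt/(2p·ε²))·(J + εD). Then every non-real eigenvalue of A_{δt} lies in the closed disk in ℂ with center 1 − δt/ε² and radius (δt/(2p·ε))·max_{1≤j≤p}(|α_j| + |β_j|). -/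
/-- The diagonal vector `(α_p − iβ_p, …, α_1 − iβ_1, α_1 + iβ_1, …, α_p + iβ_p)`, indexed
by `Fin p ⊕ Fin p` (the order of the diagonal entries is immaterial for spectral purposes). -/
noncomputable def stmt13Dvec {p : ℕ} (α β : Fin p → ℝ) : Fin p ⊕ Fin p → ℂ :=
  Sum.elim (fun j => (α j : ℂ) - Complex.I * (β j : ℂ))
    (fun j => (α j : ℂ) + Complex.I * (β j : ℂ))

lemma stmt13aux (u y b : ℝ) (h1 : u + (y + b) * (y + b) ≠ 0)
    (h2 : u + (y - b) * (y - b) ≠ 0) :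
    -(y + b) / (u + (y + b) * (y + b)) + -(y - b) / (u + (y - b) * (y - b))
      = -(2 * y) * ((u + y ^ 2 - b ^ 2)
          / ((u + (y + b) * (y + b)) * (u + (y - b) * (y - b)))) := by
  rw [div_add_div _ _ h1 h2, mul_div_assoc']
  congr 1
  ring

/-- Every non-real eigenvalue of the amplification matrix
`A_{δt} = (1 − δt/ε²) I + (δt/(2p ε²)) (J + εD)` lies in the closed disk with center
`1 − δt/ε²` and radius `(δt/(2pε)) max_j (|α_j| + |β_j|)`. -/
theorem stmt13 (p : ℕ) (hp : 1 ≤ p) (α β : Fin p → ℝ)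
    (hD : Function.Injective (stmt13Dvec α β)) (ε δt : ℝ) (hε : 0 < ε) (hδt : 0 < δt)
    (z : ℂ) (hz : z.im ≠ 0)
    (hzeig : ∃ W : Fin p ⊕ Fin p → ℂ, W ≠ 0 ∧
      (((1 - δt / ε ^ 2 : ℝ) : ℂ) • (1 : Matrix (Fin p ⊕ Fin p) (Fin p ⊕ Fin p) ℂ)
        + ((δt / (2 * p * ε ^ 2) : ℝ) : ℂ) •
          ((Matrix.of fun _ _ => (1 : ℂ))
            + (ε : ℂ) • Matrix.diagonal (stmt13Dvec α β))).mulVec W = z • W) :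
    ‖z - ((1 - δt / ε ^ 2 : ℝ) : ℂ)‖
      ≤ δt / (2 * p * ε) * Finset.univ.sup'
          (Finset.univ_nonempty_iff.mpr (Fin.pos_iff_nonempty.mp hp))
          (fun j => |α j| + |β j|) := by
  obtain ⟨W, hW0, hAW⟩ := hzeig
  set d := stmt13Dvec α β with hd
  have hp' : (0 : ℝ) < p := by exact_mod_cast hp
  set M : ℝ := Finset.univ.sup'
      (Finset.univ_nonempty_iff.mpr (Fin.pos_iff_nonempty.mp hp))
      (fun j => |α j| + |β j|) with hM
  have hMle : ∀ j, |α j| + |β j| ≤ M := fun j =>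
    Finset.le_sup' (fun i => |α i| + |β i|) (Finset.mem_univ j)
  set cR : ℝ := 1 - δt / ε ^ 2 with hcR
  set sR : ℝ := δt / (2 * p * ε ^ 2) with hsR
  have hsRpos : 0 < sR := by
    apply div_pos hδt
    positivity
  have hsC : (sR : ℂ) ≠ 0 := by exact_mod_cast hsRpos.ne'
  set μ : ℂ := (z - (cR : ℂ)) / (sR : ℂ) with hμ
  have hzc : z - (cR : ℂ) = (sR : ℂ) * μ := by
    rw [hμ]; field_simp
  have hμim : μ.im ≠ 0 := by
    have h1 : z.im = sR * μ.im := by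
      have := congrArg Complex.im hzc
      simpa using this
    intro h
    rw [h, mul_zero] at h1
    exact hz h1
  -- entrywise eigen-equation
  set σ : ℂ := ∑ j, W j with hσdef
  have hJ : ((Matrix.of fun _ _ => (1 : ℂ)) :
      Matrix (Fin p ⊕ Fin p) (Fin p ⊕ Fin p) ℂ).mulVec W = fun _ => σ := by
    funext k
    simp [Matrix.mulVec, dotProduct, hσdef]
  have hDg : (Matrix.diagonal d).mulVec W = fun k => d k * W k := by
    funext k
    rw [Matrix.mulVec_diagonal]
  have hAW' : ∀ k, (cR : ℂ) * W k + (sR : ℂ) * (σ + (ε : ℂ) * (d k * W k))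
      = z * W k := by
    intro k
    have h0 := congrFun hAW k
    rw [Matrix.add_mulVec, Matrix.smul_mulVec, Matrix.smul_mulVec,
      Matrix.one_mulVec, Matrix.add_mulVec, Matrix.smul_mulVec, hJ, hDg] at h0
    simp only [Pi.add_apply, Pi.smul_apply, smul_eq_mul] at h0
    linear_combination h0
  have hσ : ∀ k, σ + (ε : ℂ) * (d k * W k) = μ * W k := by
    intro k
    have h1 := hAW' k
    have h2 : (sR : ℂ) * (σ + (ε : ℂ) * (d k * W k)) = (sR : ℂ) * (μ * W k) := by
      linear_combination h1 + W k * hzc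
    exact mul_left_cancel₀ hsC h2
  -- the key bound
  have habs : ‖μ‖ ≤ ε * M := by
    have key : (∃ k, μ = (ε : ℂ) * d k) ∨
        (∃ j, (μ.re - ε * α j) ^ 2 + μ.im ^ 2 ≤ (ε * β j) ^ 2) := by
      by_cases hσ0 : σ = 0
      · left
        obtain ⟨k, hk⟩ := Function.ne_iff.mp hW0
        refine ⟨k, ?_⟩
        have h1 := hσ k
        rw [hσ0, zero_add] at h1
        simp only [Pi.zero_apply] at hk
        have h2 : (μ - (ε : ℂ) * d k) * W k = 0 := by linear_combination - h1
        rcases mul_eq_zero.mp h2 with h | h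
        · exact sub_eq_zero.mp h
        · exact absurd h hk
      · right
        have hne : ∀ k, μ - (ε : ℂ) * d k ≠ 0 := by
          intro k h
          apply hσ0
          have h1 := hσ k
          have h2 : μ = (ε : ℂ) * d k := sub_eq_zero.mp h
          rw [h2] at h1
          linear_combination h1
        have hWk : ∀ k, W k = σ * (μ - (ε : ℂ) * d k)⁻¹ := by
          intro k
          rw [eq_comm, mul_inv_eq_iff_eq_mul₀ (hne k)]
          linear_combination hσ k
        have hsum1 : ∑ k, (μ - (ε : ℂ) * d k)⁻¹ = 1 := by
          have h1 : σ * (∑ k, (μ - (ε : ℂ) * d k)⁻¹) = σ * 1 := by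
            rw [Finset.mul_sum, mul_one]
            calc ∑ k, σ * (μ - (ε : ℂ) * d k)⁻¹ = ∑ k, W k :=
                  Finset.sum_congr rfl fun k _ => (hWk k).symm
              _ = σ := rfl
          exact mul_left_cancel₀ hσ0 h1
        set x : ℝ := μ.re with hx
        set y : ℝ := μ.im with hy
        have hre1 : ∀ j, (μ - (ε : ℂ) * d (Sum.inl j)).re = x - ε * α j := by
          intro j
          simp [hd, stmt13Dvec, Complex.sub_re, Complex.mul_re, Complex.mul_im,
            Complex.sub_im]
          rfl
        have him1 : ∀ j, (μ - (ε : ℂ) * d (Sum.inl j)).im = y + ε * β j := by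
          intro j
          simp [hd, stmt13Dvec, Complex.sub_re, Complex.mul_re, Complex.mul_im,
            Complex.sub_im]
          try ring
        have hre2 : ∀ j, (μ - (ε : ℂ) * d (Sum.inr j)).re = x - ε * α j := by
          intro j
          simp [hd, stmt13Dvec, Complex.add_re, Complex.mul_re, Complex.mul_im,
            Complex.add_im]
          rfl
        have him2 : ∀ j, (μ - (ε : ℂ) * d (Sum.inr j)).im = y - ε * β j := by
          intro j
          simp [hd, stmt13Dvec, Complex.add_re, Complex.mul_re, Complex.mul_im,
            Complex.add_im]
          try ring
        have hN1 : ∀ j, 0 < (x - ε * α j) * (x - ε * α j)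
            + (y + ε * β j) * (y + ε * β j) := by
          intro j
          have := Complex.normSq_pos.mpr (hne (Sum.inl j))
          rwa [Complex.normSq_apply, hre1 j, him1 j] at this
        have hN2 : ∀ j, 0 < (x - ε * α j) * (x - ε * α j)
            + (y - ε * β j) * (y - ε * β j) := by
          intro j
          have := Complex.normSq_pos.mpr (hne (Sum.inr j))
          rwa [Complex.normSq_apply, hre2 j, him2 j] at this
        by_contra hcon
        push_neg at hcon
        have hterm : ∀ j, ((μ - (ε : ℂ) * d (Sum.inl j))⁻¹).im
            + ((μ - (ε : ℂ) * d (Sum.inr j))⁻¹).im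
            = -(2 * y) * (((x - ε * α j) * (x - ε * α j) + y ^ 2 - (ε * β j) ^ 2)
              / (((x - ε * α j) * (x - ε * α j) + (y + ε * β j) * (y + ε * β j))
                * ((x - ε * α j) * (x - ε * α j) + (y - ε * β j) * (y - ε * β j)))) := by
          intro j
          rw [Complex.inv_im, Complex.inv_im, Complex.normSq_apply, Complex.normSq_apply,
            hre1 j, him1 j, hre2 j, him2 j]
          exact stmt13aux _ y (ε * β j) (hN1 j).ne' (hN2 j).ne'
        have him0 : ∑ j : Fin p, (((μ - (ε : ℂ) * d (Sum.inl j))⁻¹).im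
            + ((μ - (ε : ℂ) * d (Sum.inr j))⁻¹).im) = 0 := by
          have h0 := congrArg Complex.im hsum1
          rw [Complex.im_sum, Fintype.sum_sum_type, Complex.one_im] at h0
          rw [Finset.sum_add_distrib]
          exact h0
        have hgpos : ∀ j : Fin p, 0 <
            ((x - ε * α j) * (x - ε * α j) + y ^ 2 - (ε * β j) ^ 2)
              / (((x - ε * α j) * (x - ε * α j) + (y + ε * β j) * (y + ε * β j))
                * ((x - ε * α j) * (x - ε * α j) + (y - ε * β j) * (y - ε * β j))) := by
          intro j
          apply div_pos
          · have := hcon j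
            nlinarith [this]
          · exact mul_pos (hN1 j) (hN2 j)
        have hsg : 0 < ∑ j : Fin p,
            ((x - ε * α j) * (x - ε * α j) + y ^ 2 - (ε * β j) ^ 2)
              / (((x - ε * α j) * (x - ε * α j) + (y + ε * β j) * (y + ε * β j))
                * ((x - ε * α j) * (x - ε * α j) + (y - ε * β j) * (y - ε * β j))) :=
          Finset.sum_pos (fun j _ => hgpos j)
            (Finset.univ_nonempty_iff.mpr (Fin.pos_iff_nonempty.mp hp))
        have hz0 : -(2 * y) * ∑ j : Fin p,
            ((x - ε * α j) * (x - ε * α j) + y ^ 2 - (ε * β j) ^ 2)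
              / (((x - ε * α j) * (x - ε * α j) + (y + ε * β j) * (y + ε * β j))
                * ((x - ε * α j) * (x - ε * α j) + (y - ε * β j) * (y - ε * β j))) = 0 := by
          rw [Finset.mul_sum]
          rw [← him0]
          exact Finset.sum_congr rfl fun j _ => (hterm j).symm
        have hy2 : -(2 * y) ≠ 0 := by
          simp only [neg_ne_zero]
          exact mul_ne_zero two_ne_zero hμim
        have := (mul_eq_zero.mp hz0).resolve_left hy2
        rw [this] at hsg
        exact lt_irrefl 0 hsg
    rcases key with ⟨k, hk⟩ | ⟨j, hj⟩
    · have h1 : ‖μ‖ = ε * ‖d k‖ := by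
        rw [hk, norm_mul, Complex.norm_real, Real.norm_eq_abs, abs_of_pos hε]
      rcases k with j | j
      · have h2 : ‖d (Sum.inl j)‖ ^ 2 = α j ^ 2 + β j ^ 2 := by
          rw [Complex.sq_norm, Complex.normSq_apply]
          simp [hd, stmt13Dvec]
          try ring
        have h3 : ‖d (Sum.inl j)‖ ≤ |α j| + |β j| := by
          nlinarith [norm_nonneg (d (Sum.inl j)), abs_nonneg (α j),
            abs_nonneg (β j), sq_abs (α j), sq_abs (β j),
            mul_nonneg (abs_nonneg (α j)) (abs_nonneg (β j))]
        rw [h1]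
        calc ε * ‖d (Sum.inl j)‖ ≤ ε * (|α j| + |β j|) :=
              mul_le_mul_of_nonneg_left h3 hε.le
          _ ≤ ε * M := mul_le_mul_of_nonneg_left (hMle j) hε.le
      · have h2 : ‖d (Sum.inr j)‖ ^ 2 = α j ^ 2 + β j ^ 2 := by
          rw [Complex.sq_norm, Complex.normSq_apply]
          simp [hd, stmt13Dvec]
          try ring
        have h3 : ‖d (Sum.inr j)‖ ≤ |α j| + |β j| := by
          nlinarith [norm_nonneg (d (Sum.inr j)), abs_nonneg (α j),
            abs_nonneg (β j), sq_abs (α j), sq_abs (β j),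
            mul_nonneg (abs_nonneg (α j)) (abs_nonneg (β j))]
        rw [h1]
        calc ε * ‖d (Sum.inr j)‖ ≤ ε * (|α j| + |β j|) :=
              mul_le_mul_of_nonneg_left h3 hε.le
          _ ≤ ε * M := mul_le_mul_of_nonneg_left (hMle j) hε.le
    · have h2 : ‖μ - ((ε * α j : ℝ) : ℂ)‖ ^ 2
          = (μ.re - ε * α j) ^ 2 + μ.im ^ 2 := by
        rw [Complex.sq_norm, Complex.normSq_apply]
        simp
        try ring
      have h1 : ‖μ - ((ε * α j : ℝ) : ℂ)‖ ≤ ε * |β j| := by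
        nlinarith [norm_nonneg (μ - ((ε * α j : ℝ) : ℂ)), abs_nonneg (β j),
          sq_abs (β j), mul_nonneg hε.le (abs_nonneg (β j))]
      have h3 : ‖μ‖ ≤ ‖μ - ((ε * α j : ℝ) : ℂ)‖
          + ‖((ε * α j : ℝ) : ℂ)‖ := by
        simpa using norm_add_le (μ - ((ε * α j : ℝ) : ℂ)) ((ε * α j : ℝ) : ℂ)
      have h4 : ‖((ε * α j : ℝ) : ℂ)‖ = ε * |α j| := by
        rw [Complex.norm_real, Real.norm_eq_abs, abs_mul, abs_of_pos hε]
      calc ‖μ‖ ≤ ε * |β j| + ε * |α j| := by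
            rw [h4] at h3; linarith
        _ = ε * (|α j| + |β j|) := by ring
        _ ≤ ε * M := mul_le_mul_of_nonneg_left (hMle j) hε.le
  -- conclude
  rw [hzc, norm_mul, Complex.norm_real, Real.norm_eq_abs, abs_of_pos hsRpos]
  have hrad : δt / (2 * ↑p * ε) = sR * ε := by
    rw [hsR]
    field_simp
  rw [hrad, mul_assoc]
  exact mul_le_mul_of_nonneg_left habs hsRpos.le
end

section
/- Let S be an m×m complex matrix, K ∈ ℕ, and M ∈ ℂ. Define the projective forward Euler step by f ↦ S^{K+1} f + M·(S^{K+1} f − S^{K} f) for f ∈ ℂ^m. Then this step equals multiplication by the matrix T = ((1 + M)·S − M·I)·S^{K}, and the spectrum of T is exactly the set {((1 + M)·λ − M)·λ^{K} : λ an eigenvalue of S}. In particular, the projective forward Euler method is stable (all its amplification factors lie in the closed unit disk) if and only if |((1 + M)·λ − M)·λ^{K}| ≤ 1 for every eigenvalue λ of S. -/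
open Polynomial

/-- The projective forward Euler step `f ↦ S^{K+1} f + M (S^{K+1} f − S^K f)` is
multiplication by `T = ((1+M) S − M I) S^K`; the spectrum of `T` is the image of the
spectrum of `S` under `λ ↦ ((1+M)λ − M) λ^K`; hence the method is stable (all amplification
factors in the closed unit disk) iff `|((1+M)λ − M) λ^K| ≤ 1` for every eigenvalue `λ` of
`S`. -/
theorem stmt14 (m : ℕ) (S : Matrix (Fin m) (Fin m) ℂ) (K : ℕ) (M : ℂ) :
    (∀ f : Fin m → ℂ,
      (((1 + M) • S - M • (1 : Matrix (Fin m) (Fin m) ℂ)) * S ^ K).mulVec f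
        = (S ^ (K + 1)).mulVec f + M • ((S ^ (K + 1)).mulVec f - (S ^ K).mulVec f)) ∧
    spectrum ℂ (((1 + M) • S - M • (1 : Matrix (Fin m) (Fin m) ℂ)) * S ^ K)
      = (fun l : ℂ => ((1 + M) * l - M) * l ^ K) '' spectrum ℂ S ∧
    ((∀ μ ∈ spectrum ℂ (((1 + M) • S - M • (1 : Matrix (Fin m) (Fin m) ℂ)) * S ^ K),
        ‖μ‖ ≤ 1)
      ↔ ∀ l ∈ spectrum ℂ S, ‖((1 + M) * l - M) * l ^ K‖ ≤ 1) := by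
  have hT : (((1 + M) • S - M • (1 : Matrix (Fin m) (Fin m) ℂ)) * S ^ K)
      = S ^ (K + 1) + M • (S ^ (K + 1) - S ^ K) := by
    simp only [sub_mul, add_smul, smul_mul_assoc, one_mul, one_smul, smul_sub, add_mul,
      ← pow_succ']
    abel
  have hstep : ∀ f : Fin m → ℂ,
      (((1 + M) • S - M • (1 : Matrix (Fin m) (Fin m) ℂ)) * S ^ K).mulVec f
        = (S ^ (K + 1)).mulVec f + M • ((S ^ (K + 1)).mulVec f - (S ^ K).mulVec f) := by
    intro f
    rw [hT, Matrix.add_mulVec, Matrix.smul_mulVec, Matrix.sub_mulVec]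
  have hspec : spectrum ℂ (((1 + M) • S - M • (1 : Matrix (Fin m) (Fin m) ℂ)) * S ^ K)
      = (fun l : ℂ => ((1 + M) * l - M) * l ^ K) '' spectrum ℂ S := by
    rcases Nat.eq_zero_or_pos m with hm | hm
    · subst hm
      have h1 : spectrum ℂ (((1 + M) • S - M • (1 : Matrix (Fin 0) (Fin 0) ℂ)) * S ^ K)
          = ∅ := by
        ext z
        simp [spectrum.mem_iff, isUnit_of_subsingleton]
      have h2 : spectrum ℂ S = ∅ := by
        ext z
        simp [spectrum.mem_iff, isUnit_of_subsingleton]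
      simp [h1, h2]
    · haveI : NeZero m := ⟨hm.ne'⟩
      have hne : (spectrum ℂ S).Nonempty :=
        spectrum.nonempty_of_isAlgClosed_of_finiteDimensional ℂ S
      set p : ℂ[X] := (C (1 + M) * X - C M) * X ^ K with hp
      have haev : aeval S p = ((1 + M) • S - M • (1 : Matrix (Fin m) (Fin m) ℂ)) * S ^ K := by
        simp only [hp, map_mul, map_sub, aeval_C, aeval_X, map_pow,
          Algebra.algebraMap_eq_smul_one]
        congr 1
        rw [add_smul, one_smul, add_mul, smul_mul_assoc, Matrix.one_mul]
        rw [add_smul, one_smul]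
      have := spectrum.map_polynomial_aeval_of_nonempty S p hne
      rw [haev] at this
      rw [this]
      funext l
      simp [hp]
  refine ⟨hstep, hspec, ?_⟩
  rw [hspec]
  constructor
  · intro h l hl
    exact h _ ⟨l, hl, rfl⟩
  · rintro h μ ⟨l, hl, rfl⟩
    exact h l hl
end

section
/- Let p ≥ 1 be an integer, v_p = (2p − 1)/(2p) and d_p = (4p² − 1)/(12p²). Let r > 0 and ν > 0, and assume either (ν ≤ 1/4 and r ≤ 1) or r ≤ d_p/ν. Then (v_p·r)³ ≤ d_p·r²/ν; in other words, K = 3 inner steps satisfy the projective-integration stability condition v_p·r ≤ (d_p·r²/ν)^{1/K}. -/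
/-- With `v_p = (2p−1)/(2p)` and `d_p = (4p²−1)/(12p²)`, if `r, ν > 0` and either
(`ν ≤ 1/4` and `r ≤ 1`) or `r ≤ d_p/ν`, then `(v_p r)³ ≤ d_p r²/ν`, i.e. `K = 3` inner
steps satisfy the projective-integration stability condition `v_p r ≤ (d_p r²/ν)^{1/K}`. -/
theorem stmt15 (p : ℕ) (hp : 1 ≤ p) (r ν : ℝ) (hr : 0 < r) (hν : 0 < ν)
    (h : (ν ≤ 1 / 4 ∧ r ≤ 1)
      ∨ r ≤ ((4 * (p : ℝ) ^ 2 - 1) / (12 * (p : ℝ) ^ 2)) / ν) :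
    ((2 * (p : ℝ) - 1) / (2 * (p : ℝ)) * r) ^ 3
      ≤ (4 * (p : ℝ) ^ 2 - 1) / (12 * (p : ℝ) ^ 2) * r ^ 2 / ν := by
  have hP : (1:ℝ) ≤ (p:ℝ) := by exact_mod_cast hp
  have hP0 : (0:ℝ) < (p:ℝ) := by linarith
  have hv0 : 0 ≤ 2*(p:ℝ) - 1 := by linarith
  have hv3 : 0 ≤ (2*(p:ℝ) - 1)^3 := by positivity
  have hd0 : 0 ≤ 4*(p:ℝ)^2 - 1 := by nlinarith
  rw [div_mul_eq_mul_div, div_pow, div_mul_eq_mul_div, div_div,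
    div_le_div_iff₀ (by positivity) (by positivity)]
  rcases h with ⟨h1, h2⟩ | h3
  · have t1 : r^3 ≤ r^2 := by nlinarith
    have t2 : (2*(p:ℝ)-1)^3 * (12*(p:ℝ)^2*ν) ≤ (2*(p:ℝ)-1)^3 * (3*(p:ℝ)^2) := by
      apply mul_le_mul_of_nonneg_left _ hv3
      nlinarith
    have t3 : (2*(p:ℝ)-1)^3 * (3*(p:ℝ)^2) ≤ (4*(p:ℝ)^2-1) * (2*(p:ℝ))^3 := by
      nlinarith [sq_nonneg ((p:ℝ)-1), mul_pos hP0 hP0, mul_pos (mul_pos hP0 hP0) hP0]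
    calc ((2*(p:ℝ)-1)*r)^3 * (12*(p:ℝ)^2*ν)
        = ((2*(p:ℝ)-1)^3 * (12*(p:ℝ)^2*ν)) * r^3 := by ring
      _ ≤ ((2*(p:ℝ)-1)^3 * (3*(p:ℝ)^2)) * r^2 :=
          mul_le_mul t2 t1 (by positivity) (by positivity)
      _ ≤ ((4*(p:ℝ)^2-1) * (2*(p:ℝ))^3) * r^2 :=
          mul_le_mul_of_nonneg_right t3 (by positivity)
      _ = (4*(p:ℝ)^2-1) * r^2 * (2*(p:ℝ))^3 := by ring
  · rw [div_div, le_div_iff₀ (by positivity)] at h3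
    have key : (2*(p:ℝ)-1)^3 ≤ (2*(p:ℝ))^3 := by nlinarith
    calc ((2*(p:ℝ)-1)*r)^3 * (12*(p:ℝ)^2*ν)
        = ((2*(p:ℝ)-1)^3 * r^2) * (r * (12*(p:ℝ)^2*ν)) := by ring
      _ ≤ ((2*(p:ℝ)-1)^3 * r^2) * (4*(p:ℝ)^2-1) :=
          mul_le_mul_of_nonneg_left h3 (by positivity)
      _ ≤ ((2*(p:ℝ))^3 * r^2) * (4*(p:ℝ)^2-1) := by
          apply mul_le_mul_of_nonneg_right _ hd0
          exact mul_le_mul_of_nonneg_right key (by positivity)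
      _ = (4*(p:ℝ)^2-1) * r^2 * (2*(p:ℝ))^3 := by ring
end

section
/- Let R be a (possibly noncommutative) ring and let P, Φ ∈ R satisfy P·P = P and P·Φ·P = 0. Then for every integer k ≥ 3, the polynomial (C(P) − X·C(Φ))^k ∈ R[X] has: coefficient of X⁰ equal to P; coefficient of X¹ equal to −(P·Φ + Φ·P); and coefficient of X² equal to P·Φ² + Φ²·P + Φ·P·Φ + (k − 3)·(P·Φ²·P). -/
open Polynomial in
/-- If `P` is idempotent and `PΦP = 0` in a ring `R`, then for `k ≥ 3` the polynomial
`(P − XΦ)^k ∈ R[X]` has coefficient `P` in degree 0, `−(PΦ + ΦP)` in degree 1, and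
`PΦ² + Φ²P + ΦPΦ + (k−3)·(PΦ²P)` in degree 2. -/
theorem stmt17 (R : Type*) [Ring R] (P Φ : R) (hP : P * P = P) (hPΦP : P * Φ * P = 0)
    (k : ℕ) (hk : 3 ≤ k) :
    ((C P - X * C Φ) ^ k).coeff 0 = P ∧
    ((C P - X * C Φ) ^ k).coeff 1 = -(P * Φ + Φ * P) ∧
    ((C P - X * C Φ) ^ k).coeff 2
      = P * Φ ^ 2 + Φ ^ 2 * P + Φ * P * Φ + (k - 3) • (P * Φ ^ 2 * P) := by
  set A : R[X] := C P - X * C Φ with hA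
  -- helper identities in R
  have hΦPP : Φ * P * P = Φ * P := by rw [mul_assoc, hP]
  have hΦ2PP : Φ ^ 2 * P * P = Φ ^ 2 * P := by rw [mul_assoc, hP]
  have hMP : P * Φ ^ 2 * P * P = P * Φ ^ 2 * P := by rw [mul_assoc, hP]
  have hΦPΦP : Φ * P * Φ * P = 0 := by
    rw [mul_assoc Φ P Φ, mul_assoc Φ (P * Φ) P, show P * Φ * P = 0 from hPΦP, mul_zero]
  -- coefficient recursions
  have hsplit : ∀ p : R[X], p * A = p * C P - p * C Φ * X := by
    intro p
    rw [hA, mul_sub, X_mul, mul_assoc]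
  have hc0 : ∀ p : R[X], (p * A).coeff 0 = p.coeff 0 * P := by
    intro p
    rw [hsplit, coeff_sub, coeff_mul_C, mul_coeff_zero, coeff_X_zero, mul_zero, sub_zero]
  have hcs : ∀ (p : R[X]) (n : ℕ),
      (p * A).coeff (n + 1) = p.coeff (n + 1) * P - p.coeff n * Φ := by
    intro p n
    rw [hsplit, coeff_sub, coeff_mul_C, coeff_mul_X, coeff_mul_C]
  -- coefficients of A itself
  have a0 : A.coeff 0 = P := by simp [hA]
  have a1 : A.coeff 1 = -Φ := by simp [hA]
  have a2 : A.coeff 2 = 0 := by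
    rw [hA, coeff_sub, X_mul, coeff_mul_X, coeff_C, coeff_C]
    simp
  induction k, hk using Nat.le_induction with
  | base =>
    have h2 : A ^ 3 = A ^ 2 * A := by rw [← pow_succ]
    have h1 : A ^ 2 = A ^ 1 * A := by rw [← pow_succ]
    have hA1 : A ^ 1 = A := pow_one A
    have f0 : (A ^ 2).coeff 0 = P := by rw [h1, hc0, hA1, a0, hP]
    have f1 : (A ^ 2).coeff 1 = -(P * Φ) - Φ * P := by
      have := hcs (A ^ 1) 0
      rw [hA1, a1, a0, neg_mul] at this
      rw [h1, hA1] at *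
      rw [this]
      abel
    have f2 : (A ^ 2).coeff 2 = Φ * Φ := by
      have := hcs (A ^ 1) 1
      rw [hA1, a2, a1, zero_mul, neg_mul, zero_sub, neg_neg] at this
      rw [h1, hA1] at *
      exact this
    refine ⟨?_, ?_, ?_⟩
    · rw [h2, hc0, f0, hP]
    · rw [h2, show (1 : ℕ) = 0 + 1 from rfl, hcs, f1, f0, sub_mul, neg_mul, hPΦP,
        hΦPP, neg_zero, zero_sub]
      abel
    · rw [h2, show (2 : ℕ) = 1 + 1 from rfl, hcs, f2, f1]
      simp only [Nat.sub_self, zero_smul, add_zero]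
      noncomm_ring
  | succ n hn ih =>
    obtain ⟨ih0, ih1, ih2⟩ := ih
    rw [pow_succ]
    refine ⟨?_, ?_, ?_⟩
    · rw [hc0, ih0, hP]
    · rw [show (1 : ℕ) = 0 + 1 from rfl, hcs, ih1, ih0, neg_mul, add_mul, hPΦP, hΦPP,
        zero_add]
      abel
    · rw [show (2 : ℕ) = 1 + 1 from rfl, hcs, ih2, ih1]
      have hnn : n + 1 - 3 = (n - 3) + 1 := by omega
      have hsm : (n - 3) • (P * Φ ^ 2 * P) * P = (n - 3) • (P * Φ ^ 2 * P) := by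
        rw [smul_mul_assoc, hMP]
      rw [hnn, succ_nsmul, add_mul, add_mul, add_mul, hΦPΦP, hΦ2PP, hsm, neg_mul,
        add_mul, sub_neg_eq_add,
        show P * Φ * Φ = P * Φ ^ 2 by rw [mul_assoc, ← sq]]
      abel
end
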